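/- Let ⟨Z_n, {a,b}⟩ be a standardized DFA (a has defect 1 with excluded state 0 and 0·a = dupl(a); b acts as q ↦ q+1 mod n). If the DFA is completely reachable, then no proper subgroup of (Z_n, +) is invariant under the action of a. -/

import Mathlib

/-- Action of a letter: `true` is `b : q ↦ q+1`, `false` is `a`. -/
def act {n : ℕ} (a : ZMod n → ZMod n) (q : ZMod n) (c : Bool) : ZMod n :=
  if c then q + 1 else a q

/-- Action of a word on a state. -/
def wact {n : ℕ} (a : ZMod n → ZMod n) (w : List Bool) (q : ZMod n) : ZMod n :=
  w.foldl (act a) q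

/-- Excluded set of a word. -/
def excl {n : ℕ} (a : ZMod n → ZMod n) (w : List Bool) : Set (ZMod n) :=
  {q | ∀ p, wact a w p ≠ q}

/-- Duplicate set of a word. -/
def dupl {n : ℕ} (a : ZMod n → ZMod n) (w : List Bool) : Set (ZMod n) :=
  {p | ∃ q₁ q₂, q₁ ≠ q₂ ∧ wact a w q₁ = p ∧ wact a w q₂ = p}

/-- Complete reachability for a standardized binary DFA on `ZMod n`. -/
def CompletelyReachable {n : ℕ} (a : ZMod n → ZMod n) : Prop :=
  ∀ S : Set (ZMod n), S.Nonempty → ∃ w : List Bool, Set.range (wact a w) = S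

/-- Standardized DFA: `a` has defect 1 with excluded state `0`, and `0·a = dupl(a)`,
i.e. `a 0` has a second preimage `r ≠ 0`. -/
def Standardized {n : ℕ} (a : ZMod n → ZMod n) : Prop :=
  Set.range a = {(0 : ZMod n)}ᶜ ∧ ∃ r : ZMod n, r ≠ 0 ∧ a r = a 0

/-- Edge of the Rystsov graph: for some word of defect 1, `q` is the excluded state
and `p` the duplicate state. -/
def RysEdge {n : ℕ} (a : ZMod n → ZMod n) (q p : ZMod n) : Prop :=
  ∃ w : List Bool, excl a w = {q} ∧ dupl a w = {p}

/-- The difference set `D₁`. -/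
def D1 {n : ℕ} (a : ZMod n → ZMod n) : Set (ZMod n) :=
  {p | RysEdge a 0 p}

section Aux

variable {n : ℕ} (a : ZMod n → ZMod n)

/-- In a map of defect 1 with collision pair `(0, r)`, every collision is that pair. -/
lemma aux_coll (hn : 2 ≤ n) (hrange : Set.range a = {(0 : ZMod n)}ᶜ)
    (r : ZMod n) (hr0 : r ≠ 0) (har : a r = a 0) :
    ∀ x y : ZMod n, x ≠ y → a x = a y → (x = 0 ∧ y = r) ∨ (x = r ∧ y = 0) := by
  haveI : NeZero n := ⟨by omega⟩
  intro x y hxy haxy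
  by_contra hc
  push_neg at hc
  -- produce u ≠ v such that every value of `a` is attained outside {u, v}
  have key : ∃ u v : ZMod n, u ≠ v ∧ ∀ t, ∃ t', t' ≠ u ∧ t' ≠ v ∧ a t' = a t := by
    by_cases hval : a x = a 0
    · -- one fiber with at least three elements; get z ∉ {0, r} in the fiber of a 0
      have hz : ∃ z : ZMod n, z ≠ 0 ∧ z ≠ r ∧ a z = a 0 := by
        by_cases hx0 : x = 0
        · refine ⟨y, ?_, ?_, by rw [← haxy, hx0]⟩
          · rw [hx0] at hxy; exact fun h => hxy h.symm
          · exact hc.1 hx0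
        · by_cases hxr : x = r
          · refine ⟨y, hc.2 hxr, ?_, by rw [← haxy, hval]⟩
            rw [hxr] at hxy; exact fun h => hxy h.symm
          · exact ⟨x, hx0, hxr, hval⟩
      obtain ⟨z, hz0, hzr, hza⟩ := hz
      refine ⟨0, r, Ne.symm hr0, fun t => ?_⟩
      by_cases hat : a t = a 0
      · exact ⟨z, hz0, hzr, by rw [hza, hat]⟩
      · refine ⟨t, fun h => hat (by rw [h]), fun h => hat (by rw [h, har]), rfl⟩
    · -- two disjoint fat fibers
      have hx0 : x ≠ 0 := fun h => hval (by rw [h])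
      have hxr : x ≠ r := fun h => hval (by rw [h, har])
      have hy0 : y ≠ 0 := fun h => hval (by rw [haxy, h])
      have hyr : y ≠ r := fun h => hval (by rw [haxy, h, har])
      refine ⟨y, r, hyr, fun t => ?_⟩
      by_cases h0 : a t = a 0
      · exact ⟨0, hy0.symm, Ne.symm hr0, by rw [h0]⟩
      · by_cases hx : a t = a x
        · exact ⟨x, hxy, hxr, by rw [hx]⟩
        · refine ⟨t, fun h => hx (by rw [h, haxy]), fun h => h0 (by rw [h, har]), rfl⟩
  obtain ⟨u, v, huv, hcover⟩ := key
  have hsub : Set.range a ⊆ a '' ({u, v} : Set (ZMod n))ᶜ := by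
    rintro z ⟨t, rfl⟩
    obtain ⟨t', h1, h2, h3⟩ := hcover t
    exact ⟨t', by simp [h1, h2], h3⟩
  have hcard1 : (Set.range a).ncard = n - 1 := by
    have h := Set.ncard_add_ncard_compl ({(0 : ZMod n)} : Set (ZMod n))
    rw [Nat.card_zmod, Set.ncard_singleton] at h
    rw [hrange]; omega
  have hcard2 : (({u, v} : Set (ZMod n))ᶜ).ncard = n - 2 := by
    have h := Set.ncard_add_ncard_compl ({u, v} : Set (ZMod n))
    rw [Nat.card_zmod, Set.ncard_pair huv] at h
    omega
  have h1 := Set.ncard_le_ncard hsub (Set.toFinite _)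
  have h2 := Set.ncard_image_le (s := ({u, v} : Set (ZMod n))ᶜ) (f := a) (Set.toFinite _)
  rw [hcard1] at h1
  rw [hcard2] at h2
  omega

end Aux

theorem no_proper_invariant_subgroup {n : ℕ} (hn : 2 ≤ n) (a : ZMod n → ZMod n)
    (hstd : Standardized a) (hcr : CompletelyReachable a) :
    ∀ H : AddSubgroup (ZMod n), (∀ h ∈ H, a h ∈ H) → H = ⊤ := by
  intro H hinv
  obtain ⟨hrange, r, hr0, har⟩ := hstd
  haveI : NeZero n := ⟨by omega⟩
  have coll := aux_coll a hn hrange r hr0 har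
  have ha0 : ∀ x : ZMod n, a x ≠ 0 := by
    intro x hx
    have hmem : a x ∈ Set.range a := ⟨x, rfl⟩
    rw [hrange] at hmem
    exact hmem (by simp [hx])
  by_contra hne
  -- r ∈ H
  have hr : r ∈ H := by
    by_contra hrH
    have hinjH : Set.InjOn a (↑H : Set (ZMod n)) := by
      intro x hx y hy hxy
      by_contra hxyne
      rcases coll x y hxyne hxy with ⟨h1, h2⟩ | ⟨h1, h2⟩
      · exact hrH (h2 ▸ hy)
      · exact hrH (h1 ▸ hx)
    have hsub : a '' (↑H : Set (ZMod n)) ⊆ (↑H : Set (ZMod n)) \ {0} := by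
      rintro z ⟨h, hh, rfl⟩
      exact ⟨hinv h hh, ha0 h⟩
    have h1 : (a '' (↑H : Set (ZMod n))).ncard = (↑H : Set (ZMod n)).ncard :=
      Set.ncard_image_of_injOn hinjH
    have h2 : ((↑H : Set (ZMod n)) \ {0}).ncard = (↑H : Set (ZMod n)).ncard - 1 :=
      Set.ncard_diff_singleton_of_mem (by simpa using H.zero_mem)
    have h3 := Set.ncard_le_ncard hsub (Set.toFinite _)
    have h4 : 0 < (↑H : Set (ZMod n)).ncard :=
      (Set.ncard_pos (Set.toFinite _)).mpr ⟨0, by simpa using H.zero_mem⟩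
    omega
  -- a '' H = H \ {0}
  have himg : a '' (↑H : Set (ZMod n)) = (↑H : Set (ZMod n)) \ {0} := by
    have hsub : a '' (↑H : Set (ZMod n)) ⊆ (↑H : Set (ZMod n)) \ {0} := by
      rintro z ⟨h, hh, rfl⟩
      exact ⟨hinv h hh, ha0 h⟩
    have heq : a '' (↑H : Set (ZMod n)) = a '' ((↑H : Set (ZMod n)) \ {r}) := by
      apply Set.Subset.antisymm
      · rintro z ⟨h, hh, rfl⟩
        by_cases hhr : h = r
        · exact ⟨0, ⟨by simpa using H.zero_mem, by simp [Ne.symm hr0]⟩, by rw [← har, hhr]⟩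
        · exact ⟨h, ⟨hh, hhr⟩, rfl⟩
      · rintro z ⟨h, ⟨hh, _⟩, rfl⟩
        exact ⟨h, hh, rfl⟩
    have hinj : Set.InjOn a ((↑H : Set (ZMod n)) \ {r}) := by
      intro x hx y hy hxy
      by_contra hxyne
      rcases coll x y hxyne hxy with ⟨h1, h2⟩ | ⟨h1, h2⟩
      · exact hy.2 h2
      · exact hx.2 h1
    have h1 : (a '' ((↑H : Set (ZMod n)) \ {r})).ncard
        = ((↑H : Set (ZMod n)) \ {r}).ncard := Set.ncard_image_of_injOn hinj
    have h2 : ((↑H : Set (ZMod n)) \ {r}).ncard = (↑H : Set (ZMod n)).ncard - 1 :=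
      Set.ncard_diff_singleton_of_mem (by simpa using hr)
    have h3 : ((↑H : Set (ZMod n)) \ {0}).ncard = (↑H : Set (ZMod n)).ncard - 1 :=
      Set.ncard_diff_singleton_of_mem (by simpa using H.zero_mem)
    apply Set.eq_of_subset_of_ncard_le hsub _ (Set.toFinite _)
    rw [heq, h1]
    omega
  -- a x ∈ H ↔ x ∈ H
  have hpre : ∀ x : ZMod n, a x ∈ H → x ∈ H := by
    intro x hax
    by_contra hx
    have hmem : a x ∈ (↑H : Set (ZMod n)) \ {0} := ⟨by simpa using hax, ha0 x⟩
    rw [← himg] at hmem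
    obtain ⟨h, hh, hhx⟩ := hmem
    have hne' : h ≠ x := fun e => hx (e ▸ (by simpa using hh))
    rcases coll h x hne' hhx with ⟨h1, h2⟩ | ⟨h1, h2⟩
    · exact hx (h2 ▸ hr)
    · exact hx (h2 ▸ H.zero_mem)
  -- main induction: no word reaches the complement of a coset of H
  have key : ∀ w : List Bool, ∀ c : ZMod n,
      Set.range (wact a w) ≠ {x : ZMod n | x - c ∈ H}ᶜ := by
    intro w
    induction w using List.reverseRecOn with
    | nil =>
      intro c hcon
      have hmem : c ∈ Set.range (wact a []) := ⟨c, rfl⟩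
      rw [hcon] at hmem
      exact hmem (by rw [Set.mem_setOf_eq, sub_self]; exact H.zero_mem)
    | append_singleton w x ih =>
      intro c hcon
      have hsplit : Set.range (wact a (w ++ [x]))
          = (fun q => act a q x) '' Set.range (wact a w) := by
        have hfun : wact a (w ++ [x]) = (fun q => act a q x) ∘ wact a w :=
          funext fun q => by simp [wact, List.foldl_append]
        rw [hfun, Set.range_comp]
      rw [hsplit] at hcon
      cases x with
      | true =>
        simp only [act, if_true] at hcon
        apply ih (c - 1)
        ext q
        simp only [Set.mem_compl_iff, Set.mem_setOf_eq]
        have h' := Set.ext_iff.mp hcon (q + 1)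
        simp only [Set.mem_compl_iff, Set.mem_setOf_eq] at h'
        have himg' : q + 1 ∈ (fun q => q + 1) '' Set.range (wact a w)
            ↔ q ∈ Set.range (wact a w) := by
          constructor
          · rintro ⟨p, hp, hpq⟩
            have : p = q := by
              have := hpq; simpa using add_right_cancel this
            exact this ▸ hp
          · intro hq; exact ⟨q, hq, rfl⟩
        rw [himg'] at h'
        have harith : q + 1 - c = q - (c - 1) := by ring
        rw [harith] at h'
        exact h'
      | false =>
        simp only [act, if_neg Bool.false_ne_true] at hcon
        have hcH : c ∈ H := by
          by_contra hcH
          have h0 : (0 : ZMod n) ∈ {x : ZMod n | x - c ∈ H}ᶜ := by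
            intro h0'
            rw [Set.mem_setOf_eq, zero_sub] at h0'
            exact hcH (by simpa using H.neg_mem h0')
          rw [← hcon] at h0
          obtain ⟨t, _, hat⟩ := h0
          exact ha0 t hat
        have hHc : {x : ZMod n | x - c ∈ H} = (↑H : Set (ZMod n)) := by
          ext z
          simp only [Set.mem_setOf_eq, SetLike.mem_coe]
          constructor
          · intro hz; have := H.add_mem hz hcH; simpa using this
          · intro hz; exact H.sub_mem hz hcH
        rw [hHc] at hcon
        have hR : Set.range (wact a w) = (↑H : Set (ZMod n))ᶜ := by
          have hsub : Set.range (wact a w) ⊆ (↑H : Set (ZMod n))ᶜ := by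
            intro q hq hqH
            have hmem : a q ∈ a '' Set.range (wact a w) := ⟨q, hq, rfl⟩
            rw [hcon] at hmem
            exact hmem (by simpa using hinv q (by simpa using hqH))
          apply Set.Subset.antisymm hsub
          intro y hy
          have hyH : y ∉ H := by simpa using hy
          have hay : a y ∈ (↑H : Set (ZMod n))ᶜ := by
            intro hmem
            exact hyH (hpre y (by simpa using hmem))
          rw [← hcon] at hay
          obtain ⟨q, hqR, hq⟩ := hay
          rcases eq_or_ne q y with rfl | hqy
          · exact hqR
          · rcases coll q y hqy hq with ⟨h1, h2⟩ | ⟨h1, h2⟩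
            · exact absurd (h2 ▸ hr) hyH
            · exact absurd (h2 ▸ H.zero_mem) hyH
        apply ih 0
        rw [hR]
        ext z
        simp [sub_zero]
  -- conclude
  have hex : ∃ x : ZMod n, x ∉ H := by
    by_contra hall
    push_neg at hall
    exact hne ((AddSubgroup.eq_top_iff' H).mpr hall)
  obtain ⟨x, hx⟩ := hex
  obtain ⟨w, hw⟩ := hcr ((↑H : Set (ZMod n))ᶜ) ⟨x, by simpa using hx⟩
  apply key w 0
  rw [hw]
  ext z
  simp [sub_zero]
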